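/- Let h be a uniform recursive hash function family with recursion function F, i.e., h(x_2,...,x_{n+1}) = F(h(x_1,...,x_n), x_1, x_{n+1}) and for every input u and every y in [0,2^L), P(h(u)=y) = 1/2^L. Then for any fixed symbols v, w, the map x ↦ F(x, v, w) is injective on [0,2^L). -/

import Mathlib

open MeasureTheory

/-- For a uniform recursive hash function family with recursion function `F`,
the map `x ↦ F(x, v, w)` is injective on the range `[0, 2^L)` for any fixed symbols `v, w`. -/
theorem stmt_1
    {Ω : Type*} [MeasurableSpace Ω] (μ : Measure Ω) [IsProbabilityMeasure μ]
    {A : Type*} (n L : ℕ) (hn : 1 ≤ n)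
    (H : Ω → (Fin n → A) → Fin (2 ^ L))
    (F : Fin (2 ^ L) → A → A → Fin (2 ^ L))
    (hmeas : ∀ (u : Fin n → A) (y : Fin (2 ^ L)), MeasurableSet {ω | H ω u = y})
    (hrec : ∀ ω (x : Fin (n + 1) → A),
      H ω (fun i => x i.succ) = F (H ω (fun i => x i.castSucc)) (x 0) (x (Fin.last n)))
    (hunif : ∀ (u : Fin n → A) (y : Fin (2 ^ L)), μ {ω | H ω u = y} = 1 / 2 ^ L) :
    ∀ v w : A, Function.Injective (fun x : Fin (2 ^ L) => F x v w) := by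
  intro v w a b hab
  simp only at hab
  by_contra hne
  set x : Fin (n + 1) → A := fun i => if i = 0 then v else w with hx
  have h0 : x 0 = v := by simp [hx]
  have hlast : x (Fin.last n) = w := by
    have : (Fin.last n : Fin (n+1)) ≠ 0 := by
      simp [Fin.ext_iff]; omega
    simp [hx, this]
  set u1 : Fin n → A := fun i => x i.castSucc with hu1
  set u2 : Fin n → A := fun i => x i.succ with hu2
  have key : ∀ ω, H ω u2 = F (H ω u1) v w := by
    intro ω
    have := hrec ω x
    rw [h0, hlast] at this
    exact this
  have hsub1 : {ω | H ω u1 = a} ⊆ {ω | H ω u2 = F a v w} := by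
    intro ω h
    simp only [Set.mem_setOf_eq] at h ⊢
    rw [key ω, h]
  have hsub2 : {ω | H ω u1 = b} ⊆ {ω | H ω u2 = F a v w} := by
    intro ω h
    simp only [Set.mem_setOf_eq] at h ⊢
    rw [key ω, h, ← hab]
  have hdisj : Disjoint {ω | H ω u1 = a} {ω | H ω u1 = b} := by
    rw [Set.disjoint_left]
    intro ω h1 h2
    simp only [Set.mem_setOf_eq] at h1 h2
    exact hne (h1 ▸ h2 ▸ rfl)
  have hunion : μ ({ω | H ω u1 = a} ∪ {ω | H ω u1 = b})
      = μ {ω | H ω u1 = a} + μ {ω | H ω u1 = b} :=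
    measure_union hdisj (hmeas u1 b)
  have hle : μ {ω | H ω u1 = a} + μ {ω | H ω u1 = b} ≤ μ {ω | H ω u2 = F a v w} := by
    rw [← hunion]
    exact measure_mono (Set.union_subset hsub1 hsub2)
  rw [hunif u1 a, hunif u1 b, hunif u2 (F a v w)] at hle
  have hne0 : (1 : ENNReal) / 2 ^ L ≠ 0 := by
    simp [ENNReal.div_eq_zero_iff]
  have hnetop : (1 : ENNReal) / 2 ^ L ≠ ⊤ := by
    simp [ENNReal.div_eq_top]
  have : (1 : ENNReal) / 2 ^ L ≤ 0 := by
    have h := hle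
    nth_rewrite 3 [← add_zero ((1 : ENNReal) / 2 ^ L)] at h
    exact ENNReal.le_of_add_le_add_left hnetop (by rwa [add_comm] at h)
  exact hne0 (le_antisymm this zero_le)
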